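/- Signature identity: let p ≥ 2, σ ∈ S_p with σ⁻¹(1) =: t ≤ p−1, set ϑ = σ(t+1), let φ: {1,…,p−2} → {1,…,p}∖{t, t+1} and ψ: {1,…,p−2} → {2,…,p}∖{ϑ} be the strictly increasing bijections, and define γ = ψ⁻¹ ∘ σ ∘ φ ∈ S_{p−2} (using the restriction of σ). Then sgn(σ) = (−1)^ϑ · sgn(γ). -/
import Mathlib


open scoped BigOperators

lemma strictMono_range_unique {n m : ℕ} {f g : Fin n → Fin m}
    (hf : StrictMono f) (hg : StrictMono g)
    (h : ∀ x, (∃ i, f i = x) ↔ (∃ i, g i = x)) : f = g := by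
  classical
  set s : Finset (Fin m) := Finset.image f Finset.univ with hs
  have hcard : s.card = n := by
    rw [hs, Finset.card_image_of_injective _ hf.injective, Finset.card_univ, Fintype.card_fin]
  have h1 : f = s.orderEmbOfFin hcard :=
    Finset.orderEmbOfFin_unique hcard
      (fun x => Finset.mem_image.2 ⟨x, Finset.mem_univ _, rfl⟩) hf
  have h2 : g = s.orderEmbOfFin hcard := by
    refine Finset.orderEmbOfFin_unique hcard (fun x => Finset.mem_image.2 ?_) hg
    obtain ⟨i, hi⟩ := (h (g x)).2 ⟨x, rfl⟩
    exact ⟨i, Finset.mem_univ _, hi⟩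
  rw [h1, h2]

/-- Signature identity: let `σ ∈ S_p` (on `Fin p`, 0-indexed) with `σ t = 0` and
`t + 1 < p`, set `ϑ = σ (t+1)`, let `φ : Fin (p−2) → Fin p` be the strictly
increasing enumeration of the complement of `{t, t+1}`, `ψ` the strictly
increasing enumeration of `{1,…,p−1} ∖ {ϑ}`, and let `γ ∈ S_{p−2}` satisfy
`σ ∘ φ = ψ ∘ γ`. Then `sgn σ = (−1)^{ϑ+1} sgn γ` (here `ϑ+1` is the 1-indexed
value of `ϑ`). -/
theorem signature_identity (p : ℕ) (hp : 2 ≤ p) (σ : Equiv.Perm (Fin p))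
    (t t' : Fin p) (ht : σ t = ⟨0, by omega⟩) (htlt : (t : ℕ) + 1 < p)
    (ht' : (t' : ℕ) = (t : ℕ) + 1)
    (φ ψ : Fin (p - 2) → Fin p)
    (hφmono : StrictMono φ) (hψmono : StrictMono ψ)
    (hφrange : ∀ x : Fin p, (∃ i, φ i = x) ↔ x ≠ t ∧ x ≠ t')
    (hψrange : ∀ x : Fin p, (∃ i, ψ i = x) ↔ (x : ℕ) ≠ 0 ∧ x ≠ σ t')
    (γ : Equiv.Perm (Fin (p - 2))) (hγ : ∀ i, σ (φ i) = ψ (γ i)) :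
    (Equiv.Perm.sign σ : ℤ) =
      (-1) ^ (((σ t' : Fin p) : ℕ) + 1) * (Equiv.Perm.sign γ : ℤ) := by
  classical
  obtain ⟨n, rfl⟩ : ∃ n, p = n + 1 := ⟨p - 1, by omega⟩
  set ϑ : Fin (n + 1) := σ t' with hϑdef
  have hn : 1 ≤ n := by omega
  have htv : (t : ℕ) + 1 < n + 1 := htlt
  have hϑlt : (ϑ : ℕ) < n + 1 := ϑ.isLt
  have htt' : t ≠ t' := fun h => by have := congrArg Fin.val h; omega
  have ht0 : σ t = 0 := by rw [ht]; exact Fin.ext (by simp)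
  have hval1 : ((1 : Fin (n + 1)) : ℕ) = 1 := by
    have h : ((1 : Fin (n + 1)) : ℕ) = 1 % (n + 1) := rfl
    rw [h, Nat.mod_eq_of_lt (by omega)]
  have hadd : ∀ a : Fin (n + 1), (a : ℕ) + 1 < n + 1 → ((a + 1 : Fin (n + 1)) : ℕ) = a + 1 := by
    intro a ha
    simp only [Fin.add_def]
    rw [hval1]
    exact Nat.mod_eq_of_lt ha
  have hϑ0 : (ϑ : ℕ) ≠ 0 := by
    intro h
    have h2 : σ t' = σ t := by rw [ht0]; exact Fin.ext (by simp [← hϑdef, h])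
    exact htt' (σ.injective h2).symm
  -- explicit formula for φ
  have hφeq : ∀ i : Fin (n + 1 - 2),
      (φ i : ℕ) = if (i : ℕ) < (t : ℕ) then (i : ℕ) else (i : ℕ) + 2 := by
    have hg : StrictMono (fun i : Fin (n + 1 - 2) =>
        (⟨if (i : ℕ) < (t : ℕ) then (i : ℕ) else (i : ℕ) + 2,
          by have := i.isLt; split <;> omega⟩ : Fin (n + 1))) := by
      intro a b hab
      have hab' : (a : ℕ) < (b : ℕ) := hab
      simp only [Fin.mk_lt_mk]
      split <;> split <;> omega
    have hrange : ∀ x : Fin (n + 1), (∃ i, φ i = x) ↔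
        (∃ i : Fin (n + 1 - 2),
          (⟨if (i : ℕ) < (t : ℕ) then (i : ℕ) else (i : ℕ) + 2,
            by have := i.isLt; split <;> omega⟩ : Fin (n + 1)) = x) := by
      intro x
      rw [hφrange x]
      constructor
      · rintro ⟨hx1, hx2⟩
        have hx1' : (x : ℕ) ≠ (t : ℕ) := fun h => hx1 (Fin.ext h)
        have hx2' : (x : ℕ) ≠ (t' : ℕ) := fun h => hx2 (Fin.ext h)
        have hxlt := x.isLt
        by_cases hc : (x : ℕ) < (t : ℕ)
        · exact ⟨⟨(x : ℕ), by omega⟩, Fin.ext (by simp [hc])⟩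
        · refine ⟨⟨(x : ℕ) - 2, by omega⟩, Fin.ext ?_⟩
          simp only
          rw [if_neg (by omega)]
          omega
      · rintro ⟨i, rfl⟩
        have hi := i.isLt
        constructor
        · intro h; have := congrArg Fin.val h; simp only at this; split at this <;> omega
        · intro h; have := congrArg Fin.val h; simp only at this; split at this <;> omega
    have := strictMono_range_unique hφmono hg hrange
    intro i
    rw [congrFun this i]
  -- explicit formula for ψ
  have hψeq : ∀ i : Fin (n + 1 - 2),
      (ψ i : ℕ) = if (i : ℕ) + 1 < (ϑ : ℕ) then (i : ℕ) + 1 else (i : ℕ) + 2 := by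
    have hg : StrictMono (fun i : Fin (n + 1 - 2) =>
        (⟨if (i : ℕ) + 1 < (ϑ : ℕ) then (i : ℕ) + 1 else (i : ℕ) + 2,
          by have := i.isLt; split <;> omega⟩ : Fin (n + 1))) := by
      intro a b hab
      have hab' : (a : ℕ) < (b : ℕ) := hab
      simp only [Fin.mk_lt_mk]
      split <;> split <;> omega
    have hrange : ∀ x : Fin (n + 1), (∃ i, ψ i = x) ↔
        (∃ i : Fin (n + 1 - 2),
          (⟨if (i : ℕ) + 1 < (ϑ : ℕ) then (i : ℕ) + 1 else (i : ℕ) + 2,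
            by have := i.isLt; split <;> omega⟩ : Fin (n + 1)) = x) := by
      intro x
      rw [hψrange x]
      constructor
      · rintro ⟨hx1, hx2⟩
        have hx2' : (x : ℕ) ≠ (ϑ : ℕ) := fun h => hx2 (Fin.ext h)
        have hxlt := x.isLt
        by_cases hc : (x : ℕ) < (ϑ : ℕ)
        · refine ⟨⟨(x : ℕ) - 1, by omega⟩, Fin.ext ?_⟩
          simp only
          rw [if_pos (by omega)]
          omega
        · refine ⟨⟨(x : ℕ) - 2, by omega⟩, Fin.ext ?_⟩
          simp only
          rw [if_neg (by omega)]
          omega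
      · rintro ⟨i, rfl⟩
        have hi := i.isLt
        constructor
        · simp only; split <;> omega
        · intro h; have := congrArg Fin.val h; simp only at this; split at this <;> omega
    have := strictMono_range_unique hψmono hg hrange
    intro i
    rw [congrFun this i]
  -- the embedding of `Fin (n-1)` onto `{x : Fin (n+1) // 2 <= x}`
  let e : Fin (n + 1 - 2) ≃ {x : Fin (n + 1) // 2 ≤ (x : ℕ)} :=
    { toFun := fun i => ⟨⟨(i : ℕ) + 2, by have := i.isLt; omega⟩, by simp⟩
      invFun := fun x => ⟨(x : ℕ) - 2, by have := x.1.isLt; have := x.2; omega⟩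
      left_inv := fun i => Fin.ext (by show (i : ℕ) + 2 - 2 = (i : ℕ); omega)
      right_inv := fun x => Subtype.ext (Fin.ext (by
        show (x : ℕ) - 2 + 2 = (x : ℕ); have := x.2; omega)) }
  have heval : ∀ i : Fin (n + 1 - 2), ((e i : Fin (n + 1)) : ℕ) = (i : ℕ) + 2 := fun i => rfl
  set D := Fin.cycleRange t' with hD
  have key : ∀ j, Fin.cycleRange ϑ (σ j) =
      Equiv.swap (0 : Fin (n + 1)) 1 ((γ.extendDomain e) (D (D j))) := by
    intro j
    by_cases hj1 : j = t
    · rw [hj1, ht0]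
      have h1 : Fin.cycleRange ϑ 0 = 1 := by
        rw [Fin.cycleRange_of_lt (by rw [Fin.lt_def, Fin.val_zero]; omega), zero_add]
      have h2 : D t = t' := by
        rw [hD, Fin.cycleRange_of_lt (by rw [Fin.lt_def]; omega)]
        exact Fin.ext (by rw [hadd t htv]; omega)
      have h3 : D t' = 0 := by rw [hD]; exact Fin.cycleRange_self t'
      rw [h1, h2, h3,
        Equiv.Perm.extendDomain_apply_not_subtype γ e (by rw [Fin.val_zero]; omega),
        Equiv.swap_apply_left]
    · by_cases hj2 : j = t'
      · rw [hj2, ← hϑdef, Fin.cycleRange_self]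
        have h3 : D t' = 0 := by rw [hD]; exact Fin.cycleRange_self t'
        have h4 : D 0 = 1 := by
          rw [hD, Fin.cycleRange_of_lt (by rw [Fin.lt_def, Fin.val_zero]; omega), zero_add]
        rw [h3, h4,
          Equiv.Perm.extendDomain_apply_not_subtype γ e (by rw [hval1]; omega),
          Equiv.swap_apply_right]
      · obtain ⟨i, rfl⟩ := (hφrange j).2 ⟨hj1, hj2⟩
        have hi := i.isLt
        have hki := (γ i).isLt
        set k := ((γ i : Fin (n + 1 - 2)) : ℕ) with hk
        rw [hγ i]
        have hψv := hψeq (γ i)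
        have hψne := (hψrange (ψ (γ i))).1 ⟨γ i, rfl⟩
        have hψne2 : (ψ (γ i) : ℕ) ≠ (ϑ : ℕ) := fun h => hψne.2 (Fin.ext h)
        have hLHS : (Fin.cycleRange ϑ (ψ (γ i)) : ℕ) = k + 2 := by
          by_cases hc : k + 1 < (ϑ : ℕ)
          · have hv1 : (ψ (γ i) : ℕ) = k + 1 := by rw [hψv, if_pos hc]
            rw [Fin.cycleRange_of_lt (by rw [Fin.lt_def]; omega)]
            rw [hadd _ (by omega), hv1]
          · have hv2 : (ψ (γ i) : ℕ) = k + 2 := by rw [hψv, if_neg hc]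
            rw [Fin.cycleRange_of_gt (by rw [Fin.lt_def]; omega)]
            omega
        have hφv := hφeq i
        have hDDv : ((D (D (φ i))) : ℕ) = (i : ℕ) + 2 := by
          by_cases hc : (i : ℕ) < (t : ℕ)
          · have hv : (φ i : ℕ) = (i : ℕ) := by rw [hφv, if_pos hc]
            have hs1 : D (φ i) = φ i + 1 := by
              rw [hD]; exact Fin.cycleRange_of_lt (by rw [Fin.lt_def]; omega)
            have hs1v : ((φ i + 1 : Fin (n + 1)) : ℕ) = (i : ℕ) + 1 := by
              rw [hadd _ (by omega), hv]
            have hs2 : D (φ i + 1) = φ i + 1 + 1 := by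
              rw [hD]; exact Fin.cycleRange_of_lt (by rw [Fin.lt_def]; omega)
            rw [hs1, hs2, hadd _ (by omega), hs1v]
          · have hv : (φ i : ℕ) = (i : ℕ) + 2 := by rw [hφv, if_neg hc]
            have hs1 : D (φ i) = φ i := by
              rw [hD]; exact Fin.cycleRange_of_gt (by rw [Fin.lt_def]; omega)
            rw [hs1, hs1, hv]
        have hDD : D (D (φ i)) = ((e i : {x : Fin (n + 1) // 2 ≤ (x : ℕ)}) : Fin (n + 1)) :=
          Fin.ext (by rw [hDDv, heval])
        rw [hDD, Equiv.Perm.extendDomain_apply_image,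
          Equiv.swap_apply_of_ne_of_ne
            (fun h => by have := congrArg Fin.val h; rw [heval, Fin.val_zero] at this; omega)
            (fun h => by have := congrArg Fin.val h; rw [heval, hval1] at this; omega)]
        exact Fin.ext (by rw [hLHS, heval])
  have keyEq : Fin.cycleRange ϑ * σ =
      Equiv.swap (0 : Fin (n + 1)) 1 * (γ.extendDomain e) * (D * D) := by
    refine Equiv.ext fun j => ?_
    simpa [Equiv.Perm.mul_apply] using key j
  rw [hD] at keyEq
  have hsign := congrArg Equiv.Perm.sign keyEq
  have h01 : (0 : Fin (n + 1)) ≠ 1 := fun h => by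
    have := congrArg Fin.val h; rw [Fin.val_zero, hval1] at this; omega
  simp only [map_mul, Fin.sign_cycleRange, Equiv.Perm.sign_swap h01,
    Equiv.Perm.sign_extendDomain] at hsign
  have hmain : Equiv.Perm.sign σ = (-1) ^ ((ϑ : ℕ) + 1) * Equiv.Perm.sign γ := by
    have h1 : ((-1 : ℤˣ)) ^ ((ϑ : ℕ)) * ((-1) ^ ((ϑ : ℕ)) * Equiv.Perm.sign σ)
        = (-1) ^ ((ϑ : ℕ)) * (-1 * Equiv.Perm.sign γ *
            ((-1) ^ ((t' : ℕ)) * (-1) ^ ((t' : ℕ)))) := by rw [hsign]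
    rw [← mul_assoc, ← pow_two, Int.units_sq, one_mul] at h1
    rw [h1, ← pow_two, Int.units_sq, mul_one, pow_succ, mul_assoc]
  rw [hmain]
  push_cast
  ring
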